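/- If the map π : Γ(Ω,φ) → E(Ω,φ) (defined by Pδ(ω) = δ((πP)ω) for all ω ∈ Ω) is injective and E(Ω,φ) = E_b(Ω,φ), then every operator P ∈ Γ(Ω,φ) is regular. -/

import Mathlib

open MeasureTheory Filter Topology

/-- The pairing `⟨f, μ⟩ = ∫ f dμ` of a function with a finite signed Borel measure,
defined via the Jordan decomposition of the signed measure. -/
noncomputable def spair {Ω : Type*} [MeasurableSpace Ω] (f : Ω → ℝ) (μ : SignedMeasure Ω) : ℝ :=
  (∫ ω, f ω ∂μ.toJordanDecomposition.posPart) - (∫ ω, f ω ∂μ.toJordanDecomposition.negPart)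

/-- The weak* topology on the space `X*` of finite signed Borel measures, i.e. the topology
of convergence of the pairings with all continuous functions `x ∈ C(Ω, ℝ)`. With this topology
on the codomain, the product topology on `SignedMeasure Ω → SignedMeasure Ω` is precisely the
weak* operator topology (pointwise convergence with `X*` in its weak* topology). -/
noncomputable instance weakStarTopology {Ω : Type*} [TopologicalSpace Ω] [MeasurableSpace Ω] :
    TopologicalSpace (SignedMeasure Ω) :=
  TopologicalSpace.induced (fun μ => fun x : C(Ω, ℝ) => spair (⇑x) μ) inferInstance

/-- The operator `V : X* → X*`, pushforward by `φ`: `(Vμ)(e) = μ(φ⁻¹ e)`. -/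
noncomputable def Vop {Ω : Type*} [MeasurableSpace Ω] (φ : Ω → Ω) :
    SignedMeasure Ω → SignedMeasure Ω :=
  fun μ => μ.map φ

/-- The Dirac measure at `ω`, as a signed measure. -/
noncomputable def diracSM {Ω : Type*} [MeasurableSpace Ω] (ω : Ω) : SignedMeasure Ω :=
  (Measure.dirac ω).toSignedMeasure

/-- `Γ(Ω,φ)`: the closure of `{Vⁿ : n ≥ 0}` in the weak* operator topology. -/
def GammaSG {Ω : Type*} [TopologicalSpace Ω] [MeasurableSpace Ω] (φ : Ω → Ω) :
    Set (SignedMeasure Ω → SignedMeasure Ω) :=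
  closure (Set.range fun n : ℕ => (Vop φ)^[n])

/-- `G(Ω,φ)`: the closure of the convex hull of `{Vⁿ : n ≥ 0}` in the weak* operator topology. -/
def GSG {Ω : Type*} [TopologicalSpace Ω] [MeasurableSpace Ω] (φ : Ω → Ω) :
    Set (SignedMeasure Ω → SignedMeasure Ω) :=
  closure (convexHull ℝ (Set.range fun n : ℕ => (Vop φ)^[n]))

/-- The kernel `L = {Q ∈ G(Ω,φ) : V ∘ Q = Q}` of the semigroup `G(Ω,φ)`. -/
def Lker {Ω : Type*} [TopologicalSpace Ω] [MeasurableSpace Ω] (φ : Ω → Ω) :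
    Set (SignedMeasure Ω → SignedMeasure Ω) :=
  {Q ∈ GSG φ | Vop φ ∘ Q = Q}

/-- The Ellis enveloping semigroup `E(Ω,φ)`: the closure of the iterates `{φⁿ : n ≥ 0}`
in the product topology (pointwise convergence) on `Ω → Ω`. -/
def EllisE {Ω : Type*} [TopologicalSpace Ω] (φ : Ω → Ω) : Set (Ω → Ω) :=
  closure (Set.range fun n : ℕ => φ^[n])

/-- `E_b(Ω,φ)`: the smallest set of self-maps of `Ω` containing the iterates `{φⁿ : n ≥ 0}`
and sequentially closed under pointwise convergence. -/
inductive Eb {Ω : Type*} [TopologicalSpace Ω] (φ : Ω → Ω) : (Ω → Ω) → Prop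
  | iterate (n : ℕ) : Eb φ φ^[n]
  | lim (p : ℕ → Ω → Ω) (q : Ω → Ω) (hp : ∀ k, Eb φ (p k))
      (hq : ∀ ω, Tendsto (fun k => p k ω) atTop (𝓝 (q ω))) : Eb φ q

/-- `E₁(Ω,φ)`: the set of pointwise limits of sequences of iterates `φ^{n_k}`. -/
def E1SG {Ω : Type*} [TopologicalSpace Ω] (φ : Ω → Ω) : Set (Ω → Ω) :=
  {p | ∃ n : ℕ → ℕ, ∀ ω, Tendsto (fun k => φ^[n k] ω) atTop (𝓝 (p ω))}

/-- An operator `P ∈ Γ(Ω,φ)` with `p = πP` is regular if `p` is Borel measurable and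
`(Pμ)(e) = μ(p⁻¹ e)` for every Borel probability measure `μ` and Borel set `e`. -/
def RegularOperator {Ω : Type*} [TopologicalSpace Ω] [MeasurableSpace Ω]
    (P : SignedMeasure Ω → SignedMeasure Ω) (p : Ω → Ω) : Prop :=
  Measurable p ∧ ∀ (μ : Measure Ω) [IsProbabilityMeasure μ],
    ∀ e : Set Ω, MeasurableSet e → P μ.toSignedMeasure e = (μ (p ⁻¹' e)).toReal

/-- A minimal set of the semicascade `(Ω,φ)`: a nonempty closed `φ`-invariant set containing
no proper nonempty closed `φ`-invariant subset. -/
def IsMinimalSet {Ω : Type*} [TopologicalSpace Ω] (φ : Ω → Ω) (m : Set Ω) : Prop :=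
  m.Nonempty ∧ IsClosed m ∧ Set.MapsTo φ m m ∧
    ∀ m' ⊆ m, m'.Nonempty → IsClosed m' → Set.MapsTo φ m' m' → m' = m

/-- The orbit closure of a point `ω`: the closure of the trajectory `{φⁿ ω : n ≥ 0}`. -/
def orbitClosure {Ω : Type*} [TopologicalSpace Ω] (φ : Ω → Ω) (ω : Ω) : Set Ω :=
  closure (Set.range fun n : ℕ => φ^[n] ω)

/-- A `φ`-ergodic measure: a `φ`-invariant Borel probability measure `μ` such that
`μ(e) ∈ {0,1}` for every Borel set `e` with `φ⁻¹ e = e`. -/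
def IsErgodicMeasure {Ω : Type*} [MeasurableSpace Ω] (φ : Ω → Ω) (μ : Measure Ω) : Prop :=
  IsProbabilityMeasure μ ∧ (∀ e : Set Ω, MeasurableSet e → μ (φ ⁻¹' e) = μ e) ∧
    (∀ e : Set Ω, MeasurableSet e → φ ⁻¹' e = e → μ e = 0 ∨ μ e = 1)

/-- The support of a Borel measure: the smallest closed set of full measure
(the intersection of all closed sets of full measure). -/
def msupp {Ω : Type*} [TopologicalSpace Ω] [MeasurableSpace Ω] (μ : Measure Ω) : Set Ω :=
  ⋂₀ {s : Set Ω | IsClosed s ∧ μ sᶜ = 0}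

/-- The semicascade `(Ω,φ)` is tame: for every continuous `x` and every strictly increasing
sequence `n(1) < n(2) < ⋯`, the infimum over finitely supported real coefficients `a` with
`Σ|aₖ| = 1` of the sup-norms `‖Σₖ aₖ · (x ∘ φ^{n(k)})‖` is `0`. -/
def Tame {Ω : Type*} [TopologicalSpace Ω] [CompactSpace Ω] (φ : Ω → Ω)
    (hφ : Continuous φ) : Prop :=
  ∀ (x : C(Ω, ℝ)) (n : ℕ → ℕ), StrictMono n →
    sInf {r : ℝ | ∃ a : ℕ →₀ ℝ, (∑ k ∈ a.support, |a k|) = 1 ∧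
      r = ‖∑ k ∈ a.support, a k • x.comp ⟨φ^[n k], hφ.iterate (n k)⟩‖} = 0

/-- Points `a, b` are proximal: `inf_{n ≥ 0} d(φⁿ a, φⁿ b) = 0`. -/
def Proximal {Ω : Type*} [PseudoMetricSpace Ω] (φ : Ω → Ω) (a b : Ω) : Prop :=
  (⨅ n : ℕ, dist (φ^[n] a) (φ^[n] b)) = 0

variable {Ω : Type*} [TopologicalSpace Ω] [CompactSpace Ω] [TopologicalSpace.MetrizableSpace Ω]
  [Nonempty Ω] [MeasurableSpace Ω] [BorelSpace Ω]

section AuxProof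
set_option linter.unusedSectionVars false

lemma map_toSM (μ : Measure Ω) [IsFiniteMeasure μ] {r : Ω → Ω} (hr : Measurable r) :
    μ.toSignedMeasure.map r = (μ.map r).toSignedMeasure := by
  haveI := μ.isFiniteMeasure_map r
  refine VectorMeasure.ext fun i hi => ?_
  rw [VectorMeasure.map_apply _ hr hi, Measure.toSignedMeasure_apply_measurable (hr hi),
    Measure.toSignedMeasure_apply_measurable hi, measureReal_def, measureReal_def, Measure.map_apply hr hi]

lemma diracSM_map {r : Ω → Ω} (hr : Measurable r) (ω : Ω) :
    (diracSM ω).map r = diracSM (r ω) := by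
  refine VectorMeasure.ext fun i hi => ?_
  rw [VectorMeasure.map_apply _ hr hi, diracSM, diracSM,
    Measure.toSignedMeasure_apply_measurable (hr hi),
    Measure.toSignedMeasure_apply_measurable hi]
  by_cases hmem : r ω ∈ i
  · rw [measureReal_def, measureReal_def, Measure.dirac_apply_of_mem hmem, Measure.dirac_apply_of_mem (show ω ∈ r ⁻¹' i from hmem)]
  · have h1 : (Measure.dirac ω) (r ⁻¹' i) = 0 := by
      rw [Measure.dirac_apply' _ (hr hi)]; simp [hmem]
    have h2 : (Measure.dirac (r ω)) i = 0 := by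
      rw [Measure.dirac_apply' _ hi]; simp [hmem]
    rw [measureReal_def, measureReal_def, h1, h2]

lemma sm_map_map (μ : SignedMeasure Ω) {g h : Ω → Ω} (hg : Measurable g) (hh : Measurable h) :
    (μ.map g).map h = μ.map (h ∘ g) := by
  refine VectorMeasure.ext fun i hi => ?_
  rw [VectorMeasure.map_apply _ hh hi, VectorMeasure.map_apply _ hg (hh hi),
    VectorMeasure.map_apply _ (hh.comp hg) hi, Set.preimage_comp]

lemma Vop_iter (φ : Ω → Ω) (hφ : Continuous φ) (n : ℕ) (μ : SignedMeasure Ω) :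
    (Vop φ)^[n] μ = μ.map (φ^[n]) := by
  induction n generalizing μ with
  | zero => simp [VectorMeasure.map_id]
  | succ n ih =>
    rw [Function.iterate_succ_apply, Function.iterate_succ φ n, ih (Vop φ μ)]
    exact sm_map_map μ hφ.measurable (hφ.iterate n).measurable

lemma map_sub_sm (u w : SignedMeasure Ω) {r : Ω → Ω} (hr : Measurable r) :
    (u - w).map r = u.map r - w.map r := by
  refine VectorMeasure.ext fun i hi => ?_
  rw [VectorMeasure.map_apply _ hr hi, VectorMeasure.sub_apply, VectorMeasure.sub_apply,
    VectorMeasure.map_apply _ hr hi, VectorMeasure.map_apply _ hr hi]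

lemma integrable_cm (x : C(Ω, ℝ)) (ν : Measure Ω) (hν : IsFiniteMeasure ν) : Integrable (⇑x) ν :=
  letI := hν
  (integrable_const ‖x‖).mono' x.continuous.aestronglyMeasurable
    (Filter.Eventually.of_forall fun ω => x.norm_coe_le_norm ω)

lemma spair_sub (f : Ω → ℝ) (hf : ∀ ν : Measure Ω, IsFiniteMeasure ν → Integrable f ν)
    (a b : Measure Ω) [IsFiniteMeasure a] [IsFiniteMeasure b] :
    spair f (a.toSignedMeasure - b.toSignedMeasure) = ∫ ω, f ω ∂a - ∫ ω, f ω ∂b := by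
  set s := a.toSignedMeasure - b.toSignedMeasure with hs
  have h0 : s.toJordanDecomposition.posPart.toSignedMeasure -
      s.toJordanDecomposition.negPart.toSignedMeasure = s :=
    s.toSignedMeasure_toJordanDecomposition
  have hkey : s.toJordanDecomposition.posPart + b = s.toJordanDecomposition.negPart + a := by
    refine Measure.ext fun i hi => ?_
    have h2 := congrArg (fun v : SignedMeasure Ω => v i) h0
    simp only [hs] at h2
    rw [Measure.toSignedMeasure_sub_apply hi, Measure.toSignedMeasure_sub_apply hi] at h2
    simp only [measureReal_def] at h2
    have fp := measure_ne_top s.toJordanDecomposition.posPart i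
    have fn := measure_ne_top s.toJordanDecomposition.negPart i
    have fa := measure_ne_top a i
    have fb := measure_ne_top b i
    rw [Measure.add_apply, Measure.add_apply,
      ← ENNReal.toReal_eq_toReal_iff' (ENNReal.add_ne_top.mpr ⟨fp, fb⟩)
        (ENNReal.add_ne_top.mpr ⟨fn, fa⟩),
      ENNReal.toReal_add fp fb, ENNReal.toReal_add fn fa]
    linarith
  have h3 : ∫ ω, f ω ∂s.toJordanDecomposition.posPart + ∫ ω, f ω ∂b
      = ∫ ω, f ω ∂s.toJordanDecomposition.negPart + ∫ ω, f ω ∂a := by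
    rw [← integral_add_measure (hf _ inferInstance) (hf _ inferInstance),
      ← integral_add_measure (hf _ inferInstance) (hf _ inferInstance), hkey]
  have h4 : spair f s = ∫ ω, f ω ∂s.toJordanDecomposition.posPart -
      ∫ ω, f ω ∂s.toJordanDecomposition.negPart := rfl
  rw [h4]
  linarith

lemma spair_diracSM (x : C(Ω, ℝ)) (ω : Ω) : spair (⇑x) (diracSM ω) = x ω := by
  have h0 : diracSM ω = (Measure.dirac ω).toSignedMeasure - (0 : Measure Ω).toSignedMeasure := by
    rw [Measure.toSignedMeasure_zero, sub_zero, diracSM]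
  rw [h0, spair_sub _ (fun ν hν => integrable_cm x ν hν) _ _, integral_dirac]
  simp

lemma spair_map (x : C(Ω, ℝ)) (μ : SignedMeasure Ω) {r : Ω → Ω} (hr : Measurable r) :
    spair (⇑x) (μ.map r) = ∫ ω, x (r ω) ∂μ.toJordanDecomposition.posPart
      - ∫ ω, x (r ω) ∂μ.toJordanDecomposition.negPart := by
  set a := μ.toJordanDecomposition.posPart with hsa
  set b := μ.toJordanDecomposition.negPart with hsb
  haveI := a.isFiniteMeasure_map r
  haveI := b.isFiniteMeasure_map r
  have hμ : μ = a.toSignedMeasure - b.toSignedMeasure := μ.toSignedMeasure_toJordanDecomposition.symm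
  have h1 : μ.map r = (a.map r).toSignedMeasure - (b.map r).toSignedMeasure := by
    conv_lhs => rw [hμ]
    rw [map_sub_sm _ _ hr, map_toSM a hr, map_toSM b hr]
  rw [h1, spair_sub _ (fun ν hν => integrable_cm x ν hν) _ _,
    integral_map hr.aemeasurable x.continuous.aestronglyMeasurable,
    integral_map hr.aemeasurable x.continuous.aestronglyMeasurable]

lemma spair_map_tendsto (x : C(Ω, ℝ)) (μ : SignedMeasure Ω) {p : ℕ → Ω → Ω} {q : Ω → Ω}
    (hm : ∀ k, Measurable (p k)) (hqm : Measurable q)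
    (hq : ∀ ω, Tendsto (fun k => p k ω) atTop (𝓝 (q ω))) :
    Tendsto (fun k => spair (⇑x) (μ.map (p k))) atTop (𝓝 (spair (⇑x) (μ.map q))) := by
  have key : ∀ (ν : Measure Ω) [IsFiniteMeasure ν],
      Tendsto (fun k => ∫ ω, x (p k ω) ∂ν) atTop (𝓝 (∫ ω, x (q ω) ∂ν)) := by
    intro ν _
    exact tendsto_integral_of_dominated_convergence (fun _ => ‖x‖)
      (fun k => (x.continuous.measurable.comp (hm k)).aestronglyMeasurable)
      (integrable_const _)
      (fun k => Filter.Eventually.of_forall fun ω => x.norm_coe_le_norm (p k ω))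
      (Filter.Eventually.of_forall fun ω => (x.continuous.tendsto _).comp (hq ω))
  have heq : (fun k => spair (⇑x) (μ.map (p k))) =
      fun k => ∫ ω, x (p k ω) ∂μ.toJordanDecomposition.posPart
        - ∫ ω, x (p k ω) ∂μ.toJordanDecomposition.negPart :=
    funext fun k => spair_map x μ (hm k)
  rw [heq, spair_map x μ hqm]
  exact (key _).sub (key _)

lemma mem_Gamma_of_Eb (φ : Ω → Ω) (hφ : Continuous φ) {q : Ω → Ω} (h : Eb φ q) :
    Measurable q ∧ (fun μ : SignedMeasure Ω => μ.map q) ∈ GammaSG φ := by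
  induction h with
  | iterate n =>
    refine ⟨(hφ.iterate n).measurable, ?_⟩
    exact subset_closure ⟨n, funext fun μ => Vop_iter φ hφ n μ⟩
  | lim p q hp hq ih =>
    have hm : ∀ k, Measurable (p k) := fun k => (ih k).1
    have hqm : Measurable q := measurable_of_tendsto_metrizable' atTop hm (tendsto_pi_nhds.mpr hq)
    refine ⟨hqm, ?_⟩
    have hind : IsInducing (fun ν : SignedMeasure Ω => fun x : C(Ω, ℝ) => spair (⇑x) ν) := ⟨rfl⟩
    have htend : Tendsto (fun k => (fun μ : SignedMeasure Ω => μ.map (p k))) atTop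
        (𝓝 (fun μ : SignedMeasure Ω => μ.map q)) := by
      rw [tendsto_pi_nhds]
      intro μ
      rw [hind.tendsto_nhds_iff, tendsto_pi_nhds]
      intro x
      exact spair_map_tendsto x μ hm hqm hq
    exact isClosed_closure.mem_of_tendsto htend
      (Filter.Eventually.of_forall fun k => (ih k).2)

lemma pi_mem_Ellis (φ : Ω → Ω) (hφ : Continuous φ)
    {P : SignedMeasure Ω → SignedMeasure Ω} (hP : P ∈ GammaSG φ) {p : Ω → Ω}
    (hPd : ∀ ω, P (diracSM ω) = diracSM (p ω)) : p ∈ EllisE φ := by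
  classical
  set F : (SignedMeasure Ω → SignedMeasure Ω) → (Ω → C(Ω, ℝ) → ℝ) :=
    fun T ω x => spair (⇑x) (T (diracSM ω)) with hF
  have hind : IsInducing (fun ν : SignedMeasure Ω => fun x : C(Ω, ℝ) => spair (⇑x) ν) := ⟨rfl⟩
  have hFcont : Continuous F :=
    continuous_pi fun ω => hind.continuous.comp (continuous_apply (diracSM ω))
  set e : Ω → C(Ω, ℝ) → ℝ := fun u x => x u with he'
  have hecont : Continuous e := continuous_pi fun x => x.continuous
  have heinj : Function.Injective e := by
    letI := TopologicalSpace.metrizableSpaceMetric Ω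
    intro a b hab
    have h2 := congrFun hab ⟨fun u => dist u b, continuous_id.dist continuous_const⟩
    simp only [he', ContinuousMap.coe_mk] at h2
    exact dist_eq_zero.mp (by rw [h2, dist_self])
  have hee : IsClosedEmbedding e := hecont.isClosedEmbedding heinj
  set h : (Ω → Ω) → (Ω → C(Ω, ℝ) → ℝ) := fun q ω => e (q ω) with hh
  have hind2 : IsInducing h := by
    constructor
    have key : ∀ ω : Ω, TopologicalSpace.induced (fun q : Ω → Ω => h q ω)
        (inferInstance : TopologicalSpace (C(Ω, ℝ) → ℝ)) =
        TopologicalSpace.induced (Function.eval ω) ‹TopologicalSpace Ω› := by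
      intro ω
      have h5 : (fun q : Ω → Ω => h q ω) = e ∘ Function.eval ω := rfl
      rw [h5, ← induced_compose, ← hee.isInducing.eq_induced]
    calc (Pi.topologicalSpace : TopologicalSpace (Ω → Ω))
        = ⨅ ω : Ω, TopologicalSpace.induced (Function.eval ω) ‹TopologicalSpace Ω› := rfl
      _ = ⨅ ω : Ω, TopologicalSpace.induced (fun q : Ω → Ω => h q ω) inferInstance := by
          exact (iInf_congr key).symm
      _ = TopologicalSpace.induced h Pi.topologicalSpace := by
          rw [induced_to_pi h]
  have h1 : F P ∈ closure (F '' Set.range fun n : ℕ => (Vop φ)^[n]) :=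
    image_closure_subset_closure_image hFcont ⟨P, hP, rfl⟩
  have h2 : F '' (Set.range fun n : ℕ => (Vop φ)^[n])
      = h '' (Set.range fun n : ℕ => φ^[n]) := by
    have hcomp : (F ∘ fun n : ℕ => (Vop φ)^[n]) = (h ∘ fun n : ℕ => φ^[n]) := by
      funext n ω x
      show spair (⇑x) ((Vop φ)^[n] (diracSM ω)) = x (φ^[n] ω)
      rw [Vop_iter φ hφ n, diracSM_map (hφ.iterate n).measurable, spair_diracSM]
    rw [← Set.range_comp, ← Set.range_comp, hcomp]
  have h3 : F P = h p := by
    funext ω x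
    show spair (⇑x) (P (diracSM ω)) = x (p ω)
    rw [hPd ω, spair_diracSM]
  rw [h3, h2] at h1
  have h6 := hind2.closure_eq_preimage_closure_image (Set.range fun n : ℕ => φ^[n])
  rw [EllisE, h6]
  exact h1

end AuxProof

/-- Proposition 1.5: if the canonical map `π : Γ(Ω,φ) → E(Ω,φ)` is injective (operators in
`Γ(Ω,φ)` are determined by their values on Dirac measures) and `E(Ω,φ) = E_b(Ω,φ)`, then
every operator `P ∈ Γ(Ω,φ)` is regular. -/
theorem stmt_3 (φ : Ω → Ω) (hφ : Continuous φ)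
    (hinj : ∀ P₁ ∈ GammaSG φ, ∀ P₂ ∈ GammaSG φ,
      (∀ ω : Ω, P₁ (diracSM ω) = P₂ (diracSM ω)) → P₁ = P₂)
    (hEb : EllisE φ = {p : Ω → Ω | Eb φ p}) :
    ∀ P ∈ GammaSG φ, ∀ p : Ω → Ω,
      (∀ ω : Ω, P (diracSM ω) = diracSM (p ω)) → RegularOperator P p := by
  intro P hP p hPd
  have hpE : p ∈ EllisE φ := pi_mem_Ellis φ hφ hP hPd
  have hpEb : Eb φ p := by rw [hEb] at hpE; exact hpE
  obtain ⟨hpm, hQ⟩ := mem_Gamma_of_Eb φ hφ hpEb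
  have hPQ : P = fun μ : SignedMeasure Ω => μ.map p :=
    hinj P hP _ hQ (fun ω => by rw [hPd ω, diracSM_map hpm])
  refine ⟨hpm, ?_⟩
  intro μ hμ e he
  haveI := hμ
  rw [hPQ]
  show (μ.toSignedMeasure.map p) e = _
  rw [VectorMeasure.map_apply _ hpm he, Measure.toSignedMeasure_apply_measurable (hpm he), measureReal_def]
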